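/- Let (X, τ, q) be a continuous IFSw admitting a strictly positive continuous eigenfunction of the transfer operator B_q. If ν is a Borel probability measure and ρ > 0 satisfies L_q ν = ρ·ν, then ρ = ρ(B_q), the spectral radius of B_q acting on C(X,ℝ). In particular every eigenvalue of the Markov operator associated to an eigenprobability equals the spectral radius. -/

import Mathlib

open MeasureTheory Filter

/-- If the transfer operator of a continuous IFSw with positive weights admits a
strictly positive continuous eigenfunction, then any eigenvalue `ρ > 0` of the
Markov operator associated to an eigenprobability `ν` equals the spectral
radius of `B_q` (expressed via Gelfand's formula). -/
theorem stmt4 {X : Type*} [MetricSpace X] [CompactSpace X]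
    [MeasurableSpace X] [BorelSpace X]
    {n : ℕ} (τ : Fin n → X → X) (hτ : ∀ i, Continuous (τ i))
    (q : Fin n → X → ℝ) (hq : ∀ i, Continuous (q i)) (hq0 : ∀ i x, 0 < q i x)
    (B : C(X, ℝ) →L[ℝ] C(X, ℝ))
    (hB : ∀ (f : C(X, ℝ)) (x : X), B f x = ∑ i : Fin n, q i x * f (τ i x))
    (h : C(X, ℝ)) (hh : ∀ x, 0 < h x) (lam : ℝ) (heig : B h = lam • h)
    (ν : Measure X) [IsProbabilityMeasure ν] (ρ : ℝ) (hρ : 0 < ρ)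
    (hν : ∀ f : C(X, ℝ), ∫ x, (B f) x ∂ν = ρ * ∫ x, f x ∂ν) :
    Tendsto (fun N : ℕ => ‖B ^ N‖ ^ ((N : ℝ)⁻¹)) atTop (nhds ρ) := by
  -- X is nonempty since it carries a probability measure
  have hXne : Nonempty X := by
    by_contra hX
    rw [not_nonempty_iff] at hX
    have h1 : ν Set.univ = 1 := measure_univ
    rw [Set.univ_eq_empty_iff.mpr hX, measure_empty] at h1
    exact zero_ne_one h1
  -- minimum of h
  obtain ⟨x0, -, hx0⟩ := isCompact_univ.exists_isMinOn Set.univ_nonempty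
    h.continuous.continuousOn
  set m := h x0 with hmdef
  have hm0 : 0 < m := hh x0
  have hmle : ∀ x, m ≤ h x := fun x => isMinOn_iff.mp hx0 x (Set.mem_univ x)
  -- integrability and positivity of ∫ h
  have hint : Integrable (fun x => h x) ν :=
    h.continuous.integrable_of_hasCompactSupport (HasCompactSupport.of_compactSpace _)
  have hIpos : 0 < ∫ x, h x ∂ν := by
    have hle : m ≤ ∫ x, h x ∂ν := by
      calc m = ∫ _x, m ∂ν := by simp
        _ ≤ ∫ x, h x ∂ν := integral_mono (integrable_const m) hint fun x => hmle x
    linarith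
  -- ρ = lam
  have hρlam : ρ = lam := by
    have h1 := hν h
    rw [heig] at h1
    have h2 : ∫ x, (lam • h) x ∂ν = lam * ∫ x, h x ∂ν := by
      simp [integral_const_mul]
    rw [h2] at h1
    exact (mul_right_cancel₀ hIpos.ne' h1).symm
  have hlam0 : 0 < lam := hρlam ▸ hρ
  -- positivity/monotonicity of B
  have hBpos : ∀ f : C(X, ℝ), 0 ≤ f → 0 ≤ B f := by
    intro f hf
    rw [ContinuousMap.le_def] at hf ⊢
    intro x
    simp only [ContinuousMap.zero_apply] at hf ⊢
    rw [hB]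
    exact Finset.sum_nonneg fun i _ => mul_nonneg (hq0 i x).le (hf (τ i x))
  have hBmono : ∀ f g : C(X, ℝ), f ≤ g → B f ≤ B g := by
    intro f g hfg
    have := hBpos (g - f) (sub_nonneg.mpr hfg)
    rw [map_sub] at this
    exact sub_nonneg.mp this
  have hpowmono : ∀ (N : ℕ) (f g : C(X, ℝ)), f ≤ g → (B ^ N) f ≤ (B ^ N) g := by
    intro N
    induction N with
    | zero => intro f g hfg; simpa using hfg
    | succ k ih =>
        intro f g hfg
        rw [pow_succ', ContinuousLinearMap.mul_apply, ContinuousLinearMap.mul_apply]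
        exact hBmono _ _ (ih f g hfg)
  -- (B ^ N) h = lam ^ N • h
  have hBNh : ∀ N : ℕ, (B ^ N) h = lam ^ N • h := by
    intro N
    induction N with
    | zero => simp
    | succ k ih =>
        rw [pow_succ', ContinuousLinearMap.mul_apply, ih, _root_.map_smul, heig, smul_smul,
          pow_succ, mul_comm]
  -- ‖h‖ bounds
  have hhnorm : 0 < ‖h‖ := lt_of_lt_of_le hm0 (le_trans (le_abs_self _) (h.norm_coe_le_norm x0))
  set C : ℝ := ‖h‖ / m with hCdef
  have hC0 : 0 < C := div_pos hhnorm hm0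
  -- upper bound ‖B ^ N‖ ≤ C * lam ^ N
  have hub : ∀ N : ℕ, ‖B ^ N‖ ≤ C * lam ^ N := by
    intro N
    apply ContinuousLinearMap.opNorm_le_bound _ (by positivity)
    intro f
    have hfub : f ≤ (‖f‖ / m) • h := by
      rw [ContinuousMap.le_def]
      intro x
      simp only [ContinuousMap.smul_apply, smul_eq_mul]
      calc f x ≤ ‖f‖ := le_trans (le_abs_self _) (f.norm_coe_le_norm x)
        _ = (‖f‖ / m) * m := by field_simp
        _ ≤ (‖f‖ / m) * h x := by
            apply mul_le_mul_of_nonneg_left (hmle x) (by positivity)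
    have hflb : -((‖f‖ / m) • h) ≤ f := by
      rw [ContinuousMap.le_def]
      intro x
      simp only [ContinuousMap.neg_apply, ContinuousMap.smul_apply, smul_eq_mul]
      have : -f x ≤ ‖f‖ / m * h x := by
        calc -f x ≤ ‖f‖ := le_trans (neg_le_abs _) (f.norm_coe_le_norm x)
          _ = (‖f‖ / m) * m := by field_simp
          _ ≤ (‖f‖ / m) * h x := by
              apply mul_le_mul_of_nonneg_left (hmle x) (by positivity)
      linarith
    have hub' := hpowmono N f _ hfub
    have hlb' := hpowmono N _ f hflb
    rw [_root_.map_smul, hBNh N, smul_smul] at hub'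
    rw [map_neg, _root_.map_smul, hBNh N, smul_smul] at hlb'
    rw [ContinuousMap.le_def] at hub' hlb'
    rw [ContinuousMap.norm_le _ (by positivity)]
    intro x
    have h1 := hub' x
    have h2 := hlb' x
    simp only [ContinuousMap.smul_apply, ContinuousMap.neg_apply, smul_eq_mul] at h1 h2
    have hxle : h x ≤ ‖h‖ := le_trans (le_abs_self _) (h.norm_coe_le_norm x)
    rw [Real.norm_eq_abs, abs_le]
    constructor
    · have : ‖f‖ / m * lam ^ N * h x ≤ ‖f‖ / m * lam ^ N * ‖h‖ :=
        mul_le_mul_of_nonneg_left hxle (by positivity)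
      have hC : ‖f‖ / m * lam ^ N * ‖h‖ = C * lam ^ N * ‖f‖ := by
        rw [hCdef]; ring
      nlinarith
    · have : ‖f‖ / m * lam ^ N * h x ≤ ‖f‖ / m * lam ^ N * ‖h‖ :=
        mul_le_mul_of_nonneg_left hxle (by positivity)
      have hC : ‖f‖ / m * lam ^ N * ‖h‖ = C * lam ^ N * ‖f‖ := by
        rw [hCdef]; ring
      nlinarith
  -- lower bound lam ^ N ≤ ‖B ^ N‖
  have hlb : ∀ N : ℕ, lam ^ N ≤ ‖B ^ N‖ := by
    intro N
    have h1 := (B ^ N).le_opNorm h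
    rw [hBNh N] at h1
    rw [norm_smul (lam ^ N) h, Real.norm_eq_abs, abs_of_pos (pow_pos hlam0 N)] at h1
    exact le_of_mul_le_mul_right h1 hhnorm
  -- limits
  rw [hρlam]
  have hCtend : Tendsto (fun N : ℕ => C ^ ((N : ℝ)⁻¹)) atTop (nhds 1) := by
    have hcont : ContinuousAt (fun y : ℝ => C ^ y) 0 :=
      Real.continuousAt_const_rpow hC0.ne'
    have := hcont.tendsto.comp (tendsto_inv_atTop_nhds_zero_nat (𝕜 := ℝ))
    simpa [Real.rpow_zero, Function.comp_def] using this
  have hupper : Tendsto (fun N : ℕ => C ^ ((N : ℝ)⁻¹) * lam) atTop (nhds lam) := by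
    have := hCtend.mul (tendsto_const_nhds (x := lam))
    simpa using this
  apply tendsto_of_tendsto_of_tendsto_of_le_of_le' (tendsto_const_nhds) hupper
  · filter_upwards [eventually_ge_atTop 1] with N hN
    have hNne : (N : ℝ) ≠ 0 := Nat.cast_ne_zero.mpr (by omega)
    have : lam = (lam ^ N) ^ ((N : ℝ)⁻¹) := by
      rw [← Real.rpow_natCast lam N, ← Real.rpow_mul hlam0.le,
        mul_inv_cancel₀ hNne, Real.rpow_one]
    rw [this]
    exact Real.rpow_le_rpow (pow_pos hlam0 N).le (hlb N) (by positivity)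
  · filter_upwards [eventually_ge_atTop 1] with N hN
    have hNne : (N : ℝ) ≠ 0 := Nat.cast_ne_zero.mpr (by omega)
    calc ‖B ^ N‖ ^ ((N : ℝ)⁻¹) ≤ (C * lam ^ N) ^ ((N : ℝ)⁻¹) :=
          Real.rpow_le_rpow (ContinuousLinearMap.opNorm_nonneg _) (hub N) (by positivity)
      _ = C ^ ((N : ℝ)⁻¹) * lam := by
          rw [Real.mul_rpow hC0.le (pow_pos hlam0 N).le, ← Real.rpow_natCast lam N,
            ← Real.rpow_mul hlam0.le, mul_inv_cancel₀ hNne, Real.rpow_one]
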